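/- Let A and B be n × n real positive definite correlation matrices (unit diagonal) whose eigenvalues all lie in [m, M] with 0 < m ≤ M. Then A^{1/2} ∘ B^{1/2} ≥ (2√(mM)/(m + M)) I_n in the Loewner order. -/

import Mathlib

open Matrix

section
open scoped ComplexOrder

/-- The square root of a positive semidefinite matrix, as defined in the older Mathlib
(`Matrix.PosSemidef.sqrt`, removed since). -/
noncomputable def Matrix.PosSemidef.sqrt {n 𝕜 : Type*} [Fintype n] [RCLike 𝕜] [DecidableEq n]
    {A : Matrix n n 𝕜} (hA : A.PosSemidef) : Matrix n n 𝕜 :=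
  hA.1.eigenvectorUnitary.1 * diagonal ((↑) ∘ (√·) ∘ hA.1.eigenvalues) *
    (star hA.1.eigenvectorUnitary : Matrix n n 𝕜)

end

private lemma entry_conj {n : ℕ} (U : Matrix (Fin n) (Fin n) ℝ) (d : Fin n → ℝ) (i j : Fin n) :
    (U * diagonal d * Uᴴ) i j = ∑ k, d k * (U i k * U j k) := by
  rw [Matrix.mul_apply]
  simp only [Matrix.mul_diagonal, conjTranspose_apply, star_trivial]
  exact Finset.sum_congr rfl fun k _ => by ring

private lemma hadamard_conj_decomp {n : ℕ} (U V : Matrix (Fin n) (Fin n) ℝ) (d e : Fin n → ℝ) :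
    Matrix.hadamard (U * diagonal d * Uᴴ) (V * diagonal e * Vᴴ) =
      ∑ p : Fin n × Fin n, (d p.1 * e p.2) •
        vecMulVec (fun i => U i p.1 * V i p.2) (fun i => U i p.1 * V i p.2) := by
  ext i j
  rw [Matrix.hadamard_apply, entry_conj, entry_conj, Finset.sum_mul_sum, Matrix.sum_apply]
  rw [Fintype.sum_prod_type]
  refine Finset.sum_congr rfl fun k _ => Finset.sum_congr rfl fun l _ => ?_
  simp only [Matrix.smul_apply, vecMulVec_apply, smul_eq_mul]
  ring

private lemma outer_psd {n : ℕ} (c : ℝ) (hc : 0 ≤ c) (v : Fin n → ℝ) :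
    (c • vecMulVec v v).PosSemidef := by
  rw [posSemidef_iff_dotProduct_mulVec]
  constructor
  · ext i j
    simp only [conjTranspose_apply, Matrix.smul_apply, vecMulVec_apply, smul_eq_mul,
      star_trivial]
    ring
  · intro x
    have hx : star x = x := by simp
    rw [hx, smul_mulVec, dotProduct_smul]
    have h : x ⬝ᵥ (vecMulVec v v *ᵥ x) = (∑ i, v i * x i) ^ 2 := by
      rw [pow_two, Finset.sum_mul_sum]
      simp only [dotProduct, mulVec, vecMulVec_apply, Finset.mul_sum]
      refine Finset.sum_congr rfl fun i _ => Finset.sum_congr rfl fun j _ => by ring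
    rw [smul_eq_mul, h]
    positivity

private lemma sum_outer_psd {n : ℕ} (c : Fin n × Fin n → ℝ) (z : Fin n × Fin n → Fin n → ℝ)
    (hc : ∀ p, 0 ≤ c p) :
    (∑ p : Fin n × Fin n, c p • vecMulVec (z p) (z p)).PosSemidef := by
  refine Finset.sum_induction _ _ (fun a b ha hb => ha.add hb) Matrix.PosSemidef.zero ?_
  exact fun p _ => outer_psd (c p) (hc p) (z p)

private lemma coef_nonneg {m M x y : ℝ} (hm : 0 < m) (hmM : m ≤ M)
    (hx : x ∈ Set.Icc m M) (hy : y ∈ Set.Icc m M) :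
    0 ≤ Real.sqrt x * Real.sqrt y - Real.sqrt m * Real.sqrt M / (m + M) * (x + y) := by
  have hM : 0 < M := hm.trans_le hmM
  set a := Real.sqrt m with ha'
  set b := Real.sqrt M with hb'
  set p := Real.sqrt x with hp'
  set q := Real.sqrt y with hq'
  have ha : 0 < a := Real.sqrt_pos.2 hm
  have hb : 0 < b := Real.sqrt_pos.2 hM
  have hap : a ≤ p := Real.sqrt_le_sqrt hx.1
  have hpb : p ≤ b := Real.sqrt_le_sqrt hx.2
  have haq : a ≤ q := Real.sqrt_le_sqrt hy.1
  have hqb : q ≤ b := Real.sqrt_le_sqrt hy.2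
  have hx' : x = p ^ 2 := (Real.sq_sqrt (hm.le.trans hx.1)).symm
  have hy' : y = q ^ 2 := (Real.sq_sqrt (hm.le.trans hy.1)).symm
  have hmm : m = a ^ 2 := (Real.sq_sqrt hm.le).symm
  have hMM : M = b ^ 2 := (Real.sq_sqrt hM.le).symm
  have h1 : 0 ≤ b * p - a * q := by nlinarith
  have h2 : 0 ≤ b * q - a * p := by nlinarith
  have hs : 0 < a ^ 2 + b ^ 2 := by positivity
  rw [hx', hy', hmm, hMM, sub_nonneg, div_mul_eq_mul_div, div_le_iff₀ hs]
  nlinarith [mul_nonneg h1 h2]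

/-- Reverse Kantorovich inequality for Hadamard products of correlation matrices:
`A^{1/2} ∘ B^{1/2} ≥ (2√(mM)/(m+M)) I`. -/
theorem reverse_kantorovich_hadamard {n : ℕ} (A B : Matrix (Fin n) (Fin n) ℝ)
    (hA : A.PosDef) (hB : B.PosDef)
    (hdA : ∀ i, A i i = 1) (hdB : ∀ i, B i i = 1)
    (m M : ℝ) (hm : 0 < m) (hmM : m ≤ M)
    (hspecA : spectrum ℝ A ⊆ Set.Icc m M) (hspecB : spectrum ℝ B ⊆ Set.Icc m M) :
    (Matrix.hadamard hA.posSemidef.sqrt hB.posSemidef.sqrt -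
      (2 * Real.sqrt (m * M) / (m + M)) • (1 : Matrix (Fin n) (Fin n) ℝ)).PosSemidef := by
  set U : Matrix (Fin n) (Fin n) ℝ := (hA.posSemidef.1.eigenvectorUnitary : Matrix (Fin n) (Fin n) ℝ) with hUdef
  set V : Matrix (Fin n) (Fin n) ℝ := (hB.posSemidef.1.eigenvectorUnitary : Matrix (Fin n) (Fin n) ℝ) with hVdef
  set lam : Fin n → ℝ := hA.posSemidef.1.eigenvalues with hlamdef
  set mu : Fin n → ℝ := hB.posSemidef.1.eigenvalues with hmudef
  have hlam : ∀ i, lam i ∈ Set.Icc m M := fun i =>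
    hspecA (hA.posSemidef.1.eigenvalues_mem_spectrum_real i)
  have hmu : ∀ i, mu i ∈ Set.Icc m M := fun i =>
    hspecB (hB.posSemidef.1.eigenvalues_mem_spectrum_real i)
  set r : ℝ := Real.sqrt m * Real.sqrt M / (m + M) with hrdef
  -- spectral representations
  have hXeq : hA.posSemidef.sqrt = U * diagonal (Real.sqrt ∘ lam) * Uᴴ := by
    rw [Matrix.PosSemidef.sqrt]
    simp [RCLike.ofReal_real_eq_id, star_eq_conjTranspose]
    rfl
  have hYeq : hB.posSemidef.sqrt = V * diagonal (Real.sqrt ∘ mu) * Vᴴ := by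
    rw [Matrix.PosSemidef.sqrt]
    simp [RCLike.ofReal_real_eq_id, star_eq_conjTranspose]
    rfl
  have hAeq : A = U * diagonal lam * Uᴴ := by
    simpa [RCLike.ofReal_real_eq_id, star_eq_conjTranspose] using
      hA.posSemidef.1.spectral_theorem
  have hBeq : B = V * diagonal mu * Vᴴ := by
    simpa [RCLike.ofReal_real_eq_id, star_eq_conjTranspose] using
      hB.posSemidef.1.spectral_theorem
  have hU1 : U * Uᴴ = 1 := by
    simpa [star_eq_conjTranspose] using
      (Matrix.mem_unitaryGroup_iff).mp hA.posSemidef.1.eigenvectorUnitary.2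
  have hV1 : V * Vᴴ = 1 := by
    simpa [star_eq_conjTranspose] using
      (Matrix.mem_unitaryGroup_iff).mp hB.posSemidef.1.eigenvectorUnitary.2
  have hUone : U * diagonal (fun _ => (1 : ℝ)) * Uᴴ = 1 := by
    rw [show (diagonal (fun _ : Fin n => (1 : ℝ))) = (1 : Matrix (Fin n) (Fin n) ℝ) from
      diagonal_one, mul_one, hU1]
  have hVone : V * diagonal (fun _ => (1 : ℝ)) * Vᴴ = 1 := by
    rw [show (diagonal (fun _ : Fin n => (1 : ℝ))) = (1 : Matrix (Fin n) (Fin n) ℝ) from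
      diagonal_one, mul_one, hV1]
  -- the unit-diagonal facts
  have hA1 : Matrix.hadamard A (1 : Matrix (Fin n) (Fin n) ℝ) = 1 := by
    rw [Matrix.hadamard_one]
    rw [show A.diag = fun _ : Fin n => (1 : ℝ) from funext hdA, diagonal_one]
  have hB1 : Matrix.hadamard (1 : Matrix (Fin n) (Fin n) ℝ) B = 1 := by
    rw [Matrix.hadamard_comm, Matrix.hadamard_one]
    rw [show B.diag = fun _ : Fin n => (1 : ℝ) from funext hdB, diagonal_one]
  -- rewrite the constant term
  have hc1 : (2 * Real.sqrt (m * M) / (m + M)) • (1 : Matrix (Fin n) (Fin n) ℝ) =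
      r • Matrix.hadamard A (1 : Matrix (Fin n) (Fin n) ℝ) +
      r • Matrix.hadamard (1 : Matrix (Fin n) (Fin n) ℝ) B := by
    rw [hA1, hB1, ← add_smul]
    congr 1
    rw [Real.sqrt_mul hm.le]
    ring
  rw [hc1, hXeq, hYeq]
  rw [show Matrix.hadamard A (1 : Matrix (Fin n) (Fin n) ℝ) =
      Matrix.hadamard (U * diagonal lam * Uᴴ) (V * diagonal (fun _ => (1 : ℝ)) * Vᴴ) by
    rw [hVone, ← hAeq]]
  rw [show Matrix.hadamard (1 : Matrix (Fin n) (Fin n) ℝ) B =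
      Matrix.hadamard (U * diagonal (fun _ => (1 : ℝ)) * Uᴴ) (V * diagonal mu * Vᴴ) by
    rw [hUone, ← hBeq]]
  rw [hadamard_conj_decomp U V (Real.sqrt ∘ lam) (Real.sqrt ∘ mu),
    hadamard_conj_decomp U V lam (fun _ => (1 : ℝ)),
    hadamard_conj_decomp U V (fun _ => (1 : ℝ)) mu,
    Finset.smul_sum, Finset.smul_sum, ← Finset.sum_add_distrib, ← Finset.sum_sub_distrib]
  simp only [smul_smul, ← add_smul, ← sub_smul]
  refine sum_outer_psd _ _ fun p => ?_
  have h := coef_nonneg hm hmM (hlam p.1) (hmu p.2)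
  simp only [Function.comp_apply, mul_one, one_mul]
  rw [hrdef]
  nlinarith [h]
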